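/- arXiv:2204.00287 — 3 statements merged into one kernel-verified Lean document; each statement's English description precedes it below -/
import Mathlib

section
/- Let ϱ : ℝ^d → [0,1] be measurable, let S ⊆ ℝ^d be measurable with ϱ(k) = 1 for almost every k ∉ S, and let ψ = (ψ⁽ⁿ⁾)_{n≥0} ∈ F be such that a_k ψ ∈ F for almost every k and k ↦ ‖a_k ψ‖²_F is integrable over S. Then ∑_{n≥1} ∫_{ℝ^{d·n}} (1 − ϱ(k₁)²⋯ϱ(kₙ)²) |ψ⁽ⁿ⁾(k₁,…,kₙ)|² dk₁⋯dkₙ ≤ ∫_S ‖a_k ψ‖²_F dk; in other words, as quadratic forms, 1 − Γ(ϱ²) ≤ dΓ(χ_S). -/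
/- STATEMENT 5: the quadratic-form bound `1 − Γ(ϱ²) ≤ dΓ(χ_S)` evaluated on a Fock vector:
`∑_{n≥1} ∫ (1 − ϱ(k₁)²⋯ϱ(kₙ)²)|ψ⁽ⁿ⁾|² ≤ ∫_S ‖a_k ψ‖²_F dk`.
Integrals of nonnegative quantities are taken as Lebesgue integrals in `ℝ≥0∞`. -/

open MeasureTheory
open scoped ENNReal NNReal

noncomputable section

/-- `ℝ^d`. -/
abbrev KVec (d : ℕ) := EuclideanSpace ℝ (Fin d)

/-- `ℝ^{d·n}`, realized as `n`-tuples of vectors in `ℝ^d`. -/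
abbrev KSpace (d n : ℕ) := Fin n → KVec d

/-- A function on `ℝ^{d·n}` is symmetric if it is a.e. invariant under permutations of its
`n` arguments in `ℝ^d`. -/
def IsSymFn {d n : ℕ} (ψ : KSpace d n → ℂ) : Prop :=
  ∀ σ : Equiv.Perm (Fin n), (fun K => ψ (K ∘ σ)) =ᵐ[(volume : Measure (KSpace d n))] ψ

/-- `(a_k ψ)⁽ⁿ⁾(k₁,…,kₙ) = √(n+1) ψ⁽ⁿ⁺¹⁾(k,k₁,…,kₙ)`. -/
def aFun {d : ℕ} (ψ : ∀ n, KSpace d n → ℂ) (k : KVec d) (n : ℕ) : KSpace d n → ℂ :=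
  fun K => (Real.sqrt (n + 1) : ℂ) * ψ (n + 1) (Fin.cons k K)

/-- The squared Fock norm `‖a_k ψ‖²_F`, as an extended nonnegative real. -/
def aNormSqE {d : ℕ} (ψ : ∀ n, KSpace d n → ℂ) (k : KVec d) : ℝ≥0∞ :=
  ∑' n : ℕ, ∫⁻ K : KSpace d n, (‖aFun ψ k n K‖₊ : ℝ≥0∞) ^ 2

/-- helper: `1 - ∏ aᵢ ≤ ∑ (1 - aᵢ)` for `aᵢ ∈ [0,1]`. -/
lemma one_sub_prod_le_sum_one_sub {m : ℕ} (a : Fin m → ℝ) (h : ∀ i, a i ∈ Set.Icc (0:ℝ) 1) :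
    1 - ∏ i, a i ≤ ∑ i, (1 - a i) := by
  induction m with
  | zero => simp
  | succ n ih =>
    rw [Fin.prod_univ_succ, Fin.sum_univ_succ]
    have h0 := h 0
    have hP : (0:ℝ) ≤ ∏ i : Fin n, a i.succ := Finset.prod_nonneg fun i _ => (h i.succ).1
    have hP1 : ∏ i : Fin n, a i.succ ≤ 1 :=
      Finset.prod_le_one (fun i _ => (h i.succ).1) (fun i _ => (h i.succ).2)
    have := ih (fun i => a i.succ) (fun i => h i.succ)
    nlinarith [h0.1, h0.2]

/-- helper: the coordinate-permutation map is the `piCongrLeft` measurable equiv. -/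
lemma coe_permEquiv {X : Type*} [MeasurableSpace X] {m : ℕ} (σ : Equiv.Perm (Fin m)) :
    ⇑(MeasurableEquiv.piCongrLeft (fun _ : Fin m => X) σ.symm) = fun K => K ∘ σ := by
  funext K; ext i; simp [MeasurableEquiv.piCongrLeft, Equiv.piCongrLeft]

/-- helper: the coordinate-permutation map is measure preserving. -/
lemma measurePreserving_comp_perm {d m : ℕ} (σ : Equiv.Perm (Fin m)) :
    MeasurePreserving (fun K : KSpace d m => K ∘ σ)
      (volume : Measure (KSpace d m)) (volume : Measure (KSpace d m)) := by
  have h := volume_measurePreserving_piCongrLeft (fun _ : Fin m => KVec d) σ.symm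
  rwa [coe_permEquiv σ] at h

lemma measurableEmbedding_comp_perm {d m : ℕ} (σ : Equiv.Perm (Fin m)) :
    MeasurableEmbedding (fun K : KSpace d m => K ∘ σ) := by
  have h := (MeasurableEquiv.piCongrLeft (fun _ : Fin m => KVec d) σ.symm).measurableEmbedding
  rwa [coe_permEquiv σ] at h

lemma coe_consEquiv_symm {X : Type*} [MeasurableSpace X] {n : ℕ} :
    ⇑(MeasurableEquiv.piFinSuccAbove (fun _ : Fin (n+1) => X) 0).symm
      = fun p : X × (Fin n → X) => Fin.cons p.1 p.2 := by
  funext p; simp [MeasurableEquiv.piFinSuccAbove, Fin.consEquiv]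

/-- Let `ϱ : ℝ^d → [0,1]` be measurable with `ϱ = 1` a.e. outside the measurable set `S`, and
let `ψ ∈ F` be such that `a_k ψ ∈ F` for a.e. `k` and `k ↦ ‖a_k ψ‖²_F` is integrable over
`S`. Then `∑_{n≥1} ∫ (1 − ϱ(k₁)²⋯ϱ(kₙ)²)|ψ⁽ⁿ⁾|² ≤ ∫_S ‖a_k ψ‖²_F dk`, i.e., as quadratic
forms, `1 − Γ(ϱ²) ≤ dΓ(χ_S)`. -/
theorem one_sub_gamma_le_dGamma_indicator (d : ℕ)
    (ϱ : KVec d → ℝ) (hϱ_meas : Measurable ϱ) (hϱ_range : ∀ k, ϱ k ∈ Set.Icc (0 : ℝ) 1)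
    (S : Set (KVec d)) (hS : MeasurableSet S)
    (hϱ_one : ∀ᵐ k : KVec d, k ∉ S → ϱ k = 1)
    (ψ : ∀ n, KSpace d n → ℂ)
    (hψ_mem : ∀ n, MemLp (ψ n) 2 (volume : Measure (KSpace d n)))
    (hψ_sym : ∀ n, IsSymFn (ψ n))
    (hψ_Fock : (∑' n : ℕ, ∫⁻ K : KSpace d n, (‖ψ n K‖₊ : ℝ≥0∞) ^ 2) < ⊤)
    (haψ : ∀ᵐ k : KVec d,
      (∀ n, MemLp (aFun ψ k n) 2 (volume : Measure (KSpace d n))) ∧ aNormSqE ψ k < ⊤)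
    (hint : (∫⁻ k in S, aNormSqE ψ k) < ⊤) :
    (∑' n : ℕ, ∫⁻ K : KSpace d (n + 1),
        ENNReal.ofReal (1 - ∏ i : Fin (n + 1), (ϱ (K i)) ^ 2) * (‖ψ (n + 1) K‖₊ : ℝ≥0∞) ^ 2)
      ≤ ∫⁻ k in S, aNormSqE ψ k := by
  classical
  -- measurable representatives
  set f : ∀ n, KSpace d n → ℂ := fun n => (hψ_mem n).1.mk (ψ n) with hf_def
  have hf_meas : ∀ n, StronglyMeasurable (f n) := fun n => (hψ_mem n).1.stronglyMeasurable_mk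
  have hfe : ∀ n, ψ n =ᵐ[(volume : Measure (KSpace d n))] f n := fun n => (hψ_mem n).1.ae_eq_mk
  -- the squared-norm densities
  set g : ∀ n, KSpace d n → ℝ≥0∞ := fun n K => (‖f n K‖₊ : ℝ≥0∞) ^ 2 with hg_def
  have hg_meas : ∀ n, Measurable (g n) := fun n => (hf_meas n).measurable.nnnorm.coe_nnreal_ennreal.pow_const 2
  -- the cons map and its measure-preservation
  have hcons_mp : ∀ n : ℕ, MeasurePreserving
      (fun p : KVec d × KSpace d n => Fin.cons p.1 p.2)
      ((volume : Measure (KVec d)).prod (volume : Measure (KSpace d n)))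
      (volume : Measure (KSpace d (n+1))) := by
    intro n
    have h := MeasurePreserving.symm (MeasurableEquiv.piFinSuccAbove (fun _ : Fin (n+1) => KVec d) 0)
      (volume_preserving_piFinSuccAbove (fun _ : Fin (n+1) => KVec d) 0)
    rwa [coe_consEquiv_symm] at h
  have hcons_emb : ∀ n : ℕ, MeasurableEmbedding
      (fun p : KVec d × KSpace d n => (Fin.cons p.1 p.2 : KSpace d (n+1))) := by
    intro n
    have h := (MeasurableEquiv.piFinSuccAbove (fun _ : Fin (n+1) => KVec d) 0).symm.measurableEmbedding
    rwa [coe_consEquiv_symm] at h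
  -- pointwise value of ‖aFun‖²
  have haval : ∀ n (k : KVec d) (K : KSpace d n),
      ((‖aFun ψ k n K‖₊ : ℝ≥0∞)) ^ 2
        = ENNReal.ofReal ((n : ℝ) + 1) * (‖ψ (n+1) (Fin.cons k K)‖₊ : ℝ≥0∞) ^ 2 := by
    intro n k K
    have hnn : (0:ℝ) ≤ (n : ℝ) + 1 := by positivity
    have h1 : ‖Real.sqrt ((n:ℝ)+1)‖₊ ^ 2 = ((n:ℝ)+1).toNNReal := by
      apply NNReal.coe_injective
      push_cast
      rw [Real.coe_toNNReal _ hnn, Real.norm_eq_abs, abs_of_nonneg (Real.sqrt_nonneg _),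
        Real.sq_sqrt hnn]
    rw [aFun, nnnorm_mul, ENNReal.coe_mul, mul_pow, Complex.nnnorm_real, ← ENNReal.coe_pow, h1]
    rfl
  -- a.e. slice equality
  have hslice : ∀ n : ℕ, ∀ᵐ k : KVec d,
      (∀ᵐ K : KSpace d n, ψ (n+1) (Fin.cons k K) = f (n+1) (Fin.cons k K)) := by
    intro n
    have h1 : ∀ᵐ p : KVec d × KSpace d n
        ∂((volume : Measure (KVec d)).prod (volume : Measure (KSpace d n))),
        ψ (n+1) (Fin.cons p.1 p.2) = f (n+1) (Fin.cons p.1 p.2) :=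
      (hfe (n+1)).comp_tendsto ((hcons_mp n).quasiMeasurePreserving.tendsto_ae)
    exact Measure.ae_ae_of_ae_prod h1
  -- measurability of the inner integral
  have hinner_meas : ∀ n : ℕ, Measurable (fun k : KVec d =>
      ∫⁻ K : KSpace d n, g (n+1) (Fin.cons k K)) := fun n =>
    Measurable.lintegral_prod_right' ((hg_meas (n+1)).comp (hcons_emb n).measurable)
  -- a.e. identification of the aFun integral
  have haemeas : ∀ n : ℕ, (fun k : KVec d => ∫⁻ K : KSpace d n, (‖aFun ψ k n K‖₊ : ℝ≥0∞) ^ 2)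
      =ᵐ[(volume : Measure (KVec d))]
      (fun k => ENNReal.ofReal ((n : ℝ) + 1) * ∫⁻ K : KSpace d n, g (n+1) (Fin.cons k K)) := by
    intro n
    filter_upwards [hslice n] with k hk
    calc (∫⁻ K : KSpace d n, (‖aFun ψ k n K‖₊ : ℝ≥0∞) ^ 2)
        = ∫⁻ K : KSpace d n,
            ENNReal.ofReal ((n : ℝ) + 1) * (‖ψ (n+1) (Fin.cons k K)‖₊ : ℝ≥0∞) ^ 2 := by
          simp_rw [haval n k]
      _ = ∫⁻ K : KSpace d n, ENNReal.ofReal ((n : ℝ) + 1) * g (n+1) (Fin.cons k K) := by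
          refine lintegral_congr_ae ?_
          filter_upwards [hk] with K hK
          rw [hg_def]; simp only; rw [hK]
      _ = ENNReal.ofReal ((n : ℝ) + 1) * ∫⁻ K : KSpace d n, g (n+1) (Fin.cons k K) :=
          lintegral_const_mul' _ _ ENNReal.ofReal_ne_top
  -- the core per-level inequality
  have key : ∀ n : ℕ,
      (∫⁻ K : KSpace d (n + 1),
        ENNReal.ofReal (1 - ∏ i : Fin (n + 1), (ϱ (K i)) ^ 2) * (‖ψ (n + 1) K‖₊ : ℝ≥0∞) ^ 2)
      ≤ ∫⁻ k in S, ∫⁻ K : KSpace d n, (‖aFun ψ k n K‖₊ : ℝ≥0∞) ^ 2 := by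
    intro n
    have hL1 : (∫⁻ K : KSpace d (n + 1),
        ENNReal.ofReal (1 - ∏ i : Fin (n + 1), (ϱ (K i)) ^ 2) * (‖ψ (n + 1) K‖₊ : ℝ≥0∞) ^ 2)
        = ∫⁻ K : KSpace d (n + 1),
          ENNReal.ofReal (1 - ∏ i : Fin (n + 1), (ϱ (K i)) ^ 2) * g (n+1) K := by
      refine lintegral_congr_ae ?_
      filter_upwards [hfe (n+1)] with K hK
      rw [hg_def]; simp only; rw [hK]
    have hae : ∀ᵐ K : KSpace d (n+1), ∀ i, (K i ∉ S → ϱ (K i) = 1) := by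
      rw [ae_all_iff]
      intro i
      have ht : Filter.Tendsto (fun K : KSpace d (n+1) => K i)
          (ae (volume : Measure (KSpace d (n+1)))) (ae (volume : Measure (KVec d))) := by
        have := MeasureTheory.Measure.tendsto_eval_ae_ae
          (μ := fun _ : Fin (n+1) => (volume : Measure (KVec d))) (i := i)
        rwa [← volume_pi] at this
      exact ht.eventually hϱ_one
    have hptwise : ∀ᵐ K : KSpace d (n+1),
        ENNReal.ofReal (1 - ∏ i : Fin (n + 1), (ϱ (K i)) ^ 2) * g (n+1) K
          ≤ (∑ i : Fin (n+1), S.indicator (fun _ => (1:ℝ≥0∞)) (K i)) * g (n+1) K := by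
      filter_upwards [hae] with K hK
      refine mul_le_mul_left ?_ _
      have hIcc : ∀ i : Fin (n+1), (ϱ (K i))^2 ∈ Set.Icc (0:ℝ) 1 := fun i =>
        ⟨sq_nonneg _, by nlinarith [(hϱ_range (K i)).1, (hϱ_range (K i)).2]⟩
      calc ENNReal.ofReal (1 - ∏ i : Fin (n + 1), (ϱ (K i)) ^ 2)
          ≤ ENNReal.ofReal (∑ i : Fin (n+1), (1 - (ϱ (K i))^2)) :=
            ENNReal.ofReal_le_ofReal
              (one_sub_prod_le_sum_one_sub (fun i => (ϱ (K i))^2) hIcc)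
        _ = ∑ i : Fin (n+1), ENNReal.ofReal (1 - (ϱ (K i))^2) :=
            ENNReal.ofReal_sum_of_nonneg (fun i _ => by nlinarith [(hIcc i).2])
        _ ≤ ∑ i : Fin (n+1), S.indicator (fun _ => (1:ℝ≥0∞)) (K i) := by
            refine Finset.sum_le_sum fun i _ => ?_
            by_cases h : K i ∈ S
            · rw [Set.indicator_of_mem h]
              exact ENNReal.ofReal_le_one.mpr (by nlinarith [(hIcc i).1])
            · rw [hK i h, Set.indicator_of_notMem h]; simp
    have hind_meas : ∀ i : Fin (n+1), Measurable
        (fun K : KSpace d (n+1) => S.indicator (fun _ => (1:ℝ≥0∞)) (K i) * g (n+1) K) := by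
      intro i
      exact ((measurable_const.indicator hS).comp (measurable_pi_apply i)).mul (hg_meas (n+1))
    have hgsym : ∀ σ : Equiv.Perm (Fin (n+1)),
        (fun K : KSpace d (n+1) => g (n+1) (K ∘ σ)) =ᵐ[(volume : Measure (KSpace d (n+1)))]
          g (n+1) := by
      intro σ
      have h1 : (fun K : KSpace d (n+1) => f (n+1) (K ∘ σ))
          =ᵐ[(volume : Measure (KSpace d (n+1)))] (fun K => ψ (n+1) (K ∘ σ)) :=
        (hfe (n+1)).symm.comp_tendsto
          ((measurePreserving_comp_perm (d := d) σ).quasiMeasurePreserving.tendsto_ae)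
      have h2 := (h1.trans ((hψ_sym (n+1)) σ)).trans (hfe (n+1))
      filter_upwards [h2] with K hK
      rw [hg_def]; simp only; rw [hK]
    have hterm : ∀ i : Fin (n+1),
        (∫⁻ K : KSpace d (n+1), S.indicator (fun _ => (1:ℝ≥0∞)) (K i) * g (n+1) K)
        = ∫⁻ K : KSpace d (n+1), S.indicator (fun _ => (1:ℝ≥0∞)) (K 0) * g (n+1) K := by
      intro i
      set σ := Equiv.swap (0 : Fin (n+1)) i with hσ
      have h1 := (measurePreserving_comp_perm (d := d) σ).lintegral_comp_emb
        (measurableEmbedding_comp_perm σ)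
        (fun K : KSpace d (n+1) => S.indicator (fun _ => (1:ℝ≥0∞)) (K i) * g (n+1) K)
      rw [← h1]
      have hσi : σ i = 0 := Equiv.swap_apply_right 0 i
      refine lintegral_congr_ae ?_
      filter_upwards [hgsym σ] with K hK
      simp only [Function.comp_apply, hσi, hK]
    have hsum : (∫⁻ K : KSpace d (n+1),
          (∑ i : Fin (n+1), S.indicator (fun _ => (1:ℝ≥0∞)) (K i)) * g (n+1) K)
        = ((n+1 : ℕ) : ℝ≥0∞)
            * ∫⁻ K : KSpace d (n+1), S.indicator (fun _ => (1:ℝ≥0∞)) (K 0) * g (n+1) K := by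
      simp_rw [Finset.sum_mul]
      rw [lintegral_finset_sum _ (fun i _ => hind_meas i)]
      simp_rw [hterm]
      rw [Finset.sum_const, Finset.card_fin, nsmul_eq_mul]
    have hzero : (∫⁻ K : KSpace d (n+1), S.indicator (fun _ => (1:ℝ≥0∞)) (K 0) * g (n+1) K)
        = ∫⁻ k in S, ∫⁻ K : KSpace d n, g (n+1) (Fin.cons k K) := by
      have h1 := (hcons_mp n).lintegral_comp_emb (hcons_emb n)
        (fun K : KSpace d (n+1) => S.indicator (fun _ => (1:ℝ≥0∞)) (K 0) * g (n+1) K)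
      rw [← h1]
      simp only [Fin.cons_zero]
      have hmeasint : AEMeasurable (fun a : KVec d × KSpace d n =>
          S.indicator (fun _ => (1:ℝ≥0∞)) a.1 * g (n+1) (Fin.cons a.1 a.2))
          ((volume : Measure (KVec d)).prod (volume : Measure (KSpace d n))) :=
        (((measurable_const.indicator hS).comp measurable_fst).mul
          ((hg_meas (n+1)).comp (hcons_emb n).measurable)).aemeasurable
      rw [lintegral_prod _ hmeasint]
      have h3 : ∀ k : KVec d,
          (∫⁻ K : KSpace d n, S.indicator (fun _ => (1:ℝ≥0∞)) k * g (n+1) (Fin.cons k K))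
          = S.indicator (fun k => ∫⁻ K : KSpace d n, g (n+1) (Fin.cons k K)) k := by
        intro k
        rw [lintegral_const_mul' _ _ (by
          by_cases h : k ∈ S <;>
            simp [Set.indicator_of_mem, Set.indicator_of_notMem, h])]
        by_cases h : k ∈ S <;>
          simp [Set.indicator_of_mem, Set.indicator_of_notMem, h]
      rw [lintegral_congr h3, lintegral_indicator hS]
    have hR : (∫⁻ k in S, ∫⁻ K : KSpace d n, (‖aFun ψ k n K‖₊ : ℝ≥0∞) ^ 2)
        = ENNReal.ofReal ((n:ℝ)+1) * ∫⁻ k in S, ∫⁻ K : KSpace d n, g (n+1) (Fin.cons k K) := by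
      rw [← lintegral_const_mul' _ _ ENNReal.ofReal_ne_top]
      exact lintegral_congr_ae ((haemeas n).restrict)
    have hcast : ((n+1 : ℕ) : ℝ≥0∞) = ENNReal.ofReal ((n:ℝ)+1) := by
      rw [← ENNReal.ofReal_natCast]
      push_cast
      ring_nf
    rw [hL1, hR]
    calc (∫⁻ K : KSpace d (n + 1),
          ENNReal.ofReal (1 - ∏ i : Fin (n + 1), (ϱ (K i)) ^ 2) * g (n+1) K)
        ≤ ∫⁻ K : KSpace d (n+1),
            (∑ i : Fin (n+1), S.indicator (fun _ => (1:ℝ≥0∞)) (K i)) * g (n+1) K :=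
          lintegral_mono_ae hptwise
      _ = ((n+1 : ℕ) : ℝ≥0∞)
            * ∫⁻ K : KSpace d (n+1), S.indicator (fun _ => (1:ℝ≥0∞)) (K 0) * g (n+1) K := hsum
      _ = ENNReal.ofReal ((n:ℝ)+1)
            * ∫⁻ k in S, ∫⁻ K : KSpace d n, g (n+1) (Fin.cons k K) := by rw [hzero, hcast]
  -- identify the right-hand side with a tsum and conclude
  have hRHS : (∫⁻ k in S, aNormSqE ψ k)
      = ∑' n : ℕ, ∫⁻ k in S, ∫⁻ K : KSpace d n, (‖aFun ψ k n K‖₊ : ℝ≥0∞) ^ 2 := by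
    have : (∫⁻ k in S, aNormSqE ψ k)
        = ∫⁻ k in S, ∑' n : ℕ, ∫⁻ K : KSpace d n, (‖aFun ψ k n K‖₊ : ℝ≥0∞) ^ 2 := rfl
    rw [this]
    refine lintegral_tsum fun n => ?_
    exact (((hinner_meas n).const_mul (ENNReal.ofReal ((n:ℝ)+1))).aemeasurable.congr
      ((haemeas n).restrict.symm))
  rw [hRHS]
  exact ENNReal.tsum_le_tsum key
end
end

section
/- Let n ≥ 1 and let ψ ∈ L²(ℝ^{d·n}) be invariant under permutations of its n ℝ^d-arguments. Then for every R > 0, ∫_{{|(k₁,…,kₙ)| > R}} |ψ(k₁,…,kₙ)|² dk₁⋯dkₙ ≤ ∫_{{k ∈ ℝ^d : |k| > R/n}} ‖a_k ψ‖²_{L²(ℝ^{d·(n−1)})} dk, where |(k₁,…,kₙ)| denotes the Euclidean norm on ℝ^{d·n}. -/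
/- STATEMENT 6: localization estimate for a symmetric `n`-particle wave function:
`∫_{|(k₁,…,kₙ)|>R} |ψ|² ≤ ∫_{|k|>R/n} ‖a_k ψ‖² dk`.
Here the `n`-particle space (`n ≥ 1`) is indexed as `n + 1` with `n : ℕ`, and the Euclidean
norm on `ℝ^{d·n}` is expressed via `|(k₁,…,kₙ)|² = ∑ ‖kᵢ‖²`. -/

open MeasureTheory

noncomputable section

/-- The pointwise annihilation operator on the `(n+1)`-particle space:
`(a_k ψ)(k₁,…,kₙ) = √(n+1) ψ(k,k₁,…,kₙ)`. -/
def aFun1 {d n : ℕ} (ψ : KSpace d (n + 1) → ℂ) (k : KVec d) : KSpace d n → ℂ :=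
  fun K => (Real.sqrt (n + 1) : ℂ) * ψ (Fin.cons k K)

/-- Composition with a permutation is measure preserving on `KSpace d n`. -/
lemma measurePreserving_permComp {d n : ℕ} (σ : Equiv.Perm (Fin n)) :
    MeasurePreserving (fun K : KSpace d n => K ∘ σ) volume volume := by
  have h := MeasureTheory.volume_measurePreserving_piCongrLeft
    (fun _ : Fin n => KVec d) σ.symm
  have hcoe : ⇑(MeasurableEquiv.piCongrLeft (fun _ : Fin n => KVec d) σ.symm)
      = fun K : KSpace d n => K ∘ σ := by
    funext K
    funext j
    simp [MeasurableEquiv.piCongrLeft, Equiv.piCongrLeft_apply_eq_cast]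
  rwa [hcoe] at h

/-- For a permutation-symmetric `ψ ∈ L²(ℝ^{d·(n+1)})` and any `R > 0`,
`∫_{|(k₁,…,k_{n+1})| > R} |ψ|² ≤ ∫_{|k| > R/(n+1)} ‖a_k ψ‖² dk`. -/
theorem high_momentum_tail_bound (d n : ℕ) (ψ : KSpace d (n + 1) → ℂ)
    (hψ_mem : MemLp ψ 2 (volume : Measure (KSpace d (n + 1))))
    (hψ_sym : IsSymFn ψ) (R : ℝ) (hR : 0 < R) :
    (∫ K in {K : KSpace d (n + 1) | R ^ 2 < ∑ i : Fin (n + 1), ‖K i‖ ^ 2}, ‖ψ K‖ ^ 2) ≤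
      ∫ k in {k : KVec d | R / (n + 1 : ℝ) < ‖k‖},
        ∫ K : KSpace d n, ‖aFun1 ψ k K‖ ^ 2 := by
  classical
  set r : ℝ := R / (n + 1 : ℝ) with hr_def
  set f : KSpace d (n + 1) → ℝ := fun K => ‖ψ K‖ ^ 2 with hf_def
  have hf_nonneg : ∀ K, 0 ≤ f K := fun K => sq_nonneg _
  -- integrability of |ψ|²
  have hf_int : Integrable f volume := by
    have h := hψ_mem.integrable_norm_rpow (by norm_num) (by norm_num)
    refine h.congr (Filter.Eventually.of_forall fun K => ?_)
    have h2 : ((2 : ENNReal)).toReal = ((2 : ℕ) : ℝ) := by norm_num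
    show ‖ψ K‖ ^ (2 : ENNReal).toReal = f K
    rw [h2, Real.rpow_natCast]
  -- the sets
  set S : Set (KSpace d (n + 1)) :=
    {K | R ^ 2 < ∑ i : Fin (n + 1), ‖K i‖ ^ 2} with hS_def
  set Sset : Fin (n + 1) → Set (KSpace d (n + 1)) := fun i => {K | r < ‖K i‖} with hSset_def
  set A : Set (KVec d) := {k | r < ‖k‖} with hA_def
  have hSset_meas : ∀ i, MeasurableSet (Sset i) := fun i =>
    measurableSet_lt measurable_const (measurable_pi_apply i).norm
  -- inclusion in the union
  have hsub : S ⊆ ⋃ i, Sset i := by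
    intro K hK
    by_contra hcon
    simp only [Set.mem_iUnion, not_exists, hSset_def, Set.mem_setOf_eq, not_lt] at hcon
    have hr_pos : 0 ≤ r := by positivity
    have hsum : (∑ i : Fin (n + 1), ‖K i‖ ^ 2) ≤ (n + 1 : ℝ) * r ^ 2 := by
      calc (∑ i : Fin (n + 1), ‖K i‖ ^ 2) ≤ ∑ _i : Fin (n + 1), r ^ 2 :=
            Finset.sum_le_sum fun i _ =>
              pow_le_pow_left₀ (norm_nonneg _) (hcon i) 2
        _ = (n + 1 : ℝ) * r ^ 2 := by simp [Finset.sum_const, mul_comm]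
    have h1 : (n + 1 : ℝ) * r ^ 2 ≤ R ^ 2 := by
      have hpos : (0 : ℝ) < (n : ℝ) + 1 := by positivity
      have heq : (n + 1 : ℝ) * r ^ 2 = R ^ 2 / ((n : ℝ) + 1) := by
        rw [hr_def]; field_simp
      rw [heq]
      exact div_le_self (by positivity) (by linarith)
    have hK' : R ^ 2 < ∑ i : Fin (n + 1), ‖K i‖ ^ 2 := hK
    linarith
  -- step: tail integral bounded by sum over coordinates
  have step1 : (∫ K in S, f K) ≤ ∑ i : Fin (n + 1), ∫ K in Sset i, f K := by
    have h1 : (∫ K in S, f K) ≤ ∫ K in ⋃ i, Sset i, f K := by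
      apply setIntegral_mono_set (hf_int.integrableOn)
        (Filter.Eventually.of_forall hf_nonneg)
      exact HasSubset.Subset.eventuallyLE hsub
    have h2 : (∫ K in ⋃ i, Sset i, f K) ≤ ∑ i : Fin (n + 1), ∫ K in Sset i, f K := by
      rw [← integral_indicator (MeasurableSet.iUnion hSset_meas)]
      have hrhs : ∀ i : Fin (n + 1),
          (∫ K in Sset i, f K) = ∫ K, (Sset i).indicator f K := fun i =>
        (integral_indicator (hSset_meas i)).symm
      simp_rw [hrhs]
      rw [← integral_finset_sum]
      · apply integral_mono
        · exact hf_int.indicator (MeasurableSet.iUnion hSset_meas)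
        · exact integrable_finset_sum _ fun i _ => hf_int.indicator (hSset_meas i)
        · intro K
          by_cases hK : K ∈ ⋃ i, Sset i
          · obtain ⟨i, hi⟩ := Set.mem_iUnion.mp hK
            rw [Set.indicator_of_mem hK]
            calc f K = (Sset i).indicator f K := (Set.indicator_of_mem hi f).symm
              _ ≤ ∑ j : Fin (n + 1), (Sset j).indicator f K :=
                Finset.single_le_sum
                  (fun j _ => Set.indicator_nonneg (fun x _ => hf_nonneg x) K)
                  (Finset.mem_univ i)
          · rw [Set.indicator_of_notMem hK]
            exact Finset.sum_nonneg fun j _ =>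
              Set.indicator_nonneg (fun x _ => hf_nonneg x) K
      · exact fun i _ => hf_int.indicator (hSset_meas i)
    linarith
  -- symmetry: each coordinate integral equals the 0th one
  have step2 : ∀ i : Fin (n + 1), (∫ K in Sset i, f K) = ∫ K in Sset 0, f K := by
    intro i
    set σ : Equiv.Perm (Fin (n + 1)) := Equiv.swap 0 i with hσ_def
    have hmp := measurePreserving_permComp (d := d) σ
    have hemb : MeasurableEmbedding (fun K : KSpace d (n + 1) => K ∘ σ) := by
      have hcoe : ⇑(MeasurableEquiv.piCongrLeft (fun _ : Fin (n + 1) => KVec d) σ.symm)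
          = fun K : KSpace d (n + 1) => K ∘ σ := by
        funext K; funext j
        simp [MeasurableEquiv.piCongrLeft, Equiv.piCongrLeft_apply_eq_cast]
      rw [← hcoe]
      exact (MeasurableEquiv.piCongrLeft (fun _ : Fin (n + 1) => KVec d)
        σ.symm).measurableEmbedding
    have hpre : (fun K : KSpace d (n + 1) => K ∘ σ) ⁻¹' (Sset 0) = Sset i := by
      ext K
      simp only [Set.mem_preimage, hSset_def, Set.mem_setOf_eq, Function.comp_apply]
      rw [hσ_def, Equiv.swap_apply_left]
    have key := hmp.setIntegral_preimage_emb hemb f (Sset 0)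
    rw [hpre] at key
    -- key : ∫ K in Sset i, f (K ∘ σ) = ∫ K in Sset 0, f K
    rw [← key]
    apply integral_congr_ae
    have hae : (fun K : KSpace d (n + 1) => f (K ∘ σ)) =ᵐ[volume] f := by
      filter_upwards [hψ_sym σ] with K hK
      simp only [hf_def, hK]
    exact Filter.EventuallyEq.symm (ae_restrict_of_ae hae)
  -- splitting off the first variable
  set g : KVec d × KSpace d n → ℝ := fun p => f (Fin.cons p.1 p.2) with hg_def
  have he := MeasureTheory.volume_preserving_piFinSuccAbove
    (fun _ : Fin (n + 1) => KVec d) 0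
  set e := MeasurableEquiv.piFinSuccAbove (fun _ : Fin (n + 1) => KVec d) 0 with he_def
  have he_apply : ∀ K : KSpace d (n + 1), e K = (K 0, fun j => K j.succ) := by
    intro K
    simp only [he_def, MeasurableEquiv.piFinSuccAbove, MeasurableEquiv.coe_mk,
      MeasurableEquiv.piFinSuccAbove_apply, Fin.removeNth]
    rfl
  have he_symm : ∀ p : KVec d × KSpace d n, e.symm p = Fin.cons p.1 p.2 := by
    intro p
    simp only [he_def, MeasurableEquiv.piFinSuccAbove_symm_apply]
    exact Fin.insertNth_zero' p.1 p.2
  have hg_int : Integrable g (volume : Measure (KVec d × KSpace d n)) := by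
    have h2 : Integrable (f ∘ ⇑e.symm) (volume : Measure (KVec d × KSpace d n)) := by
      rw [(he.symm e).integrable_comp_emb e.symm.measurableEmbedding]
      exact hf_int
    refine h2.congr (Filter.Eventually.of_forall fun p => ?_)
    simp [hg_def, Function.comp, he_symm p]
  have step3 : (∫ K in Sset 0, f K) = ∫ k in A, ∫ K : KSpace d n, f (Fin.cons k K) := by
    have hpre : ⇑e ⁻¹' (A ×ˢ (Set.univ : Set (KSpace d n))) = Sset 0 := by
      ext K
      simp [he_apply K, hSset_def, hA_def]
    have key := he.setIntegral_preimage_emb e.measurableEmbedding g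
      (A ×ˢ (Set.univ : Set (KSpace d n)))
    rw [hpre] at key
    have hge : ∀ K : KSpace d (n + 1), g (e K) = f K := by
      intro K
      rw [he_apply K]
      simp only [hg_def]
      congr 1
      exact Fin.cons_self_tail K
    calc (∫ K in Sset 0, f K) = ∫ K in Sset 0, g (e K) := by
          refine setIntegral_congr_ae (hSset_meas 0) ?_
          exact Filter.Eventually.of_forall fun K _ => (hge K).symm
      _ = ∫ p in A ×ˢ (Set.univ : Set (KSpace d n)), g p := key
      _ = ∫ k in A, ∫ K in (Set.univ : Set (KSpace d n)), g (k, K) := by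
          rw [Measure.volume_eq_prod]
          exact setIntegral_prod g (by
            rw [← Measure.volume_eq_prod]; exact hg_int.integrableOn)
      _ = ∫ k in A, ∫ K : KSpace d n, f (Fin.cons k K) := by
          simp [hg_def, Measure.restrict_univ]
  -- rewrite RHS
  have hnorm : ∀ (k : KVec d) (K : KSpace d n),
      ‖aFun1 ψ k K‖ ^ 2 = ((n : ℝ) + 1) * f (Fin.cons k K) := by
    intro k K
    have h1 : (0 : ℝ) ≤ (n : ℝ) + 1 := by positivity
    simp only [aFun1, hf_def, norm_mul, Complex.norm_real, Real.norm_eq_abs,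
      abs_of_nonneg (Real.sqrt_nonneg _), mul_pow, Real.sq_sqrt h1]
  have hRHS : (∫ k in A, ∫ K : KSpace d n, ‖aFun1 ψ k K‖ ^ 2)
      = ((n : ℝ) + 1) * ∫ k in A, ∫ K : KSpace d n, f (Fin.cons k K) := by
    rw [← integral_const_mul]
    apply integral_congr_ae
    refine Filter.Eventually.of_forall fun k => ?_
    simp_rw [hnorm k]
    rw [integral_const_mul]
  -- finish
  have hsum : (∑ i : Fin (n + 1), ∫ K in Sset i, f K)
      = ((n : ℝ) + 1) * ∫ K in Sset 0, f K := by
    simp_rw [step2]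
    rw [Finset.sum_const]
    simp [nsmul_eq_mul]
  calc (∫ K in S, f K) ≤ ∑ i : Fin (n + 1), ∫ K in Sset i, f K := step1
    _ = ((n : ℝ) + 1) * ∫ K in Sset 0, f K := hsum
    _ = ((n : ℝ) + 1) * ∫ k in A, ∫ K : KSpace d n, f (Fin.cons k K) := by rw [step3]
    _ = ∫ k in A, ∫ K : KSpace d n, ‖aFun1 ψ k K‖ ^ 2 := hRHS.symm
end
end

section
/- Let n ≥ 1, let ψ ∈ L²(ℝ^{d·n}) be invariant under permutations of its n ℝ^d-arguments, let ϱ : ℝ^d → [0,1] be measurable, and let G(k₁,…,kₙ) = ϱ(k₁)⋯ϱ(kₙ) ψ(k₁,…,kₙ). Then for every p = (p₁,…,pₙ) ∈ ℝ^{d·n}, ‖τ_p G − G‖²_{L²(ℝ^{d·n})} ≤ ∑_{ℓ=1}^{n} ∫_{ℝ^d} ‖ϱ(k+p_ℓ) a_{k+p_ℓ} ψ − ϱ(k) a_k ψ‖²_{L²(ℝ^{d·(n−1)})} dk, where τ_p G(x) = G(x+p). -/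
/- STATEMENT 7: translation estimate for `G = Γ(ϱ)ψ` on the `n`-particle sector:
`‖τ_p G − G‖² ≤ ∑_ℓ ∫ ‖ϱ(k+p_ℓ) a_{k+p_ℓ}ψ − ϱ(k) a_k ψ‖² dk`.
Here the `n`-particle space (`n ≥ 1`) is indexed as `n + 1` with `n : ℕ`. -/

open MeasureTheory

noncomputable section

/-- `G = Γ(ϱ)ψ` on the `(n+1)`-particle sector: `G(k₁,…,kₙ) = ϱ(k₁)⋯ϱ(kₙ)ψ(k₁,…,kₙ)`. -/
def gammaFun {d n : ℕ} (ϱ : KVec d → ℝ) (ψ : KSpace d n → ℂ) : KSpace d n → ℂ :=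
  fun K => (∏ i : Fin n, (ϱ (K i) : ℂ)) * ψ K

/-! Helper lemmas -/

lemma mpPerm (d m : ℕ) (σ : Equiv.Perm (Fin m)) :
    MeasurePreserving (fun X : KSpace d m => X ∘ σ) volume volume := by
  have h := volume_measurePreserving_piCongrLeft (fun _ : Fin m => KVec d) σ.symm
  convert h using 1
  funext X
  rw [MeasurableEquiv.coe_piCongrLeft]
  funext i
  simp [Equiv.piCongrLeft_apply, Equiv.symm_symm]

lemma mpCons (d n : ℕ) :
    MeasurePreserving (fun q : KVec d × KSpace d n => Fin.cons q.1 q.2)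
      volume (volume : Measure (KSpace d (n+1))) := by
  have h := (measurePreserving_piFinSuccAbove (fun _ : Fin (n+1) => (volume : Measure (KVec d))) 0).symm
  rw [Measure.volume_eq_prod, volume_pi, volume_pi]
  convert h using 1
  · rfl
  · rfl
  funext q
  show Fin.cons q.1 q.2 = (MeasurableEquiv.piFinSuccAbove (fun _ => KVec d) 0).symm q
  simp [MeasurableEquiv.piFinSuccAbove, Fin.insertNth_zero, Fin.consEquiv]

lemma lintegral_cons (d n : ℕ) (f : KSpace d (n+1) → ENNReal) (hf : Measurable f) :
    ∫⁻ X, f X = ∫⁻ k : KVec d, ∫⁻ K : KSpace d n, f (Fin.cons k K) := by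
  rw [← (mpCons d n).lintegral_comp hf]
  rw [Measure.volume_eq_prod, lintegral_prod]
  exact (hf.comp (mpCons d n).measurable).aemeasurable

/-- squared enorm of a complex number -/
def en2 (z : ℂ) : ENNReal := (‖z‖₊ : ENNReal) ^ 2

lemma ofReal_normsq (z : ℂ) : ENNReal.ofReal (‖z‖ ^ 2) = en2 z := by
  rw [en2, ← enorm_eq_nnnorm, ← ofReal_norm, ← ENNReal.ofReal_pow (norm_nonneg z)]

lemma en2_mono {z w : ℂ} (h : ‖z‖ ≤ ‖w‖) : en2 z ≤ en2 w := by
  unfold en2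
  gcongr
  exact_mod_cast h

/-- pointwise Cauchy–Schwarz -/
lemma en2_sum_le (m : ℕ) (z : Fin m → ℂ) :
    en2 (∑ i, z i) ≤ (m : ENNReal) * ∑ i, en2 (z i) := by
  unfold en2
  have h1 : ‖∑ i, z i‖₊ ^ 2 ≤ (m : NNReal) * ∑ i, ‖z i‖₊ ^ 2 := by
    calc ‖∑ i, z i‖₊ ^ 2 ≤ (∑ i, ‖z i‖₊) ^ 2 := by
          gcongr; exact nnnorm_sum_le _ _
    _ = (∑ i : Fin m, 1 * ‖z i‖₊) ^ 2 := by simp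
    _ ≤ (∑ i : Fin m, 1 ^ 2) * ∑ i, ‖z i‖₊ ^ 2 :=
          Finset.sum_mul_sq_le_sq_mul_sq _ _ _
    _ = (m : NNReal) * ∑ i, ‖z i‖₊ ^ 2 := by simp
  calc ((‖∑ i, z i‖₊ : ENNReal)) ^ 2 = ((‖∑ i, z i‖₊ ^ 2 : NNReal) : ENNReal) := by
        push_cast; ring
  _ ≤ (((m : NNReal) * ∑ i, ‖z i‖₊ ^ 2 : NNReal) : ENNReal) := by exact_mod_cast h1
  _ = (m : ENNReal) * ∑ i, ((‖z i‖₊ : ENNReal)) ^ 2 := by push_cast; ring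

section
variable {d n : ℕ} (ψ : KSpace d (n + 1) → ℂ) (ϱ : KVec d → ℝ) (p : KSpace d (n + 1))

def sfun (j : ℕ) : KSpace d (n+1) := fun i => if (i : ℕ) < j then p i else 0

def Gj (j : ℕ) : KSpace d (n+1) → ℂ :=
  fun K => (∏ i, (ϱ (K i + sfun p j i) : ℂ)) * ψ (K + sfun p j)

def Hf (ℓ : Fin (n+1)) : KSpace d (n+1) → ℂ :=
  fun X => (ϱ (X ℓ + p ℓ) : ℂ) * ψ (X + Pi.single ℓ (p ℓ)) - (ϱ (X ℓ) : ℂ) * ψ X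

lemma sfun_zero : sfun p 0 = 0 := by
  funext i; simp [sfun]

lemma sfun_last : sfun p (n+1) = p := by
  funext i; simp [sfun, i.isLt]

lemma sfun_step (ℓ : Fin (n+1)) :
    sfun p ((ℓ : ℕ) + 1) = sfun p ℓ + Pi.single ℓ (p ℓ) := by
  funext i
  simp only [sfun, Pi.add_apply, Pi.single_apply]
  rcases lt_trichotomy (i : ℕ) (ℓ : ℕ) with h | h | h
  · rw [if_pos (h.trans (Nat.lt_succ_self _)), if_pos h, if_neg (by
      intro he; rw [he] at h; exact lt_irrefl _ h), add_zero]
  · have he : i = ℓ := Fin.ext h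
    rw [if_pos (by omega), if_neg (by omega), if_pos he, zero_add, he]
  · rw [if_neg (by omega), if_neg (by omega), if_neg (by
      intro he; rw [he] at h; exact lt_irrefl _ h), add_zero]

lemma sfun_self (ℓ : Fin (n+1)) : sfun p ℓ ℓ = 0 := by
  simp [sfun]

lemma telescope (K : KSpace d (n+1)) :
    gammaFun ϱ ψ (K + p) - gammaFun ϱ ψ K
      = ∑ ℓ : Fin (n+1), (Gj ψ ϱ p ((ℓ : ℕ) + 1) K - Gj ψ ϱ p ℓ K) := by
  rw [Fin.sum_univ_eq_sum_range (fun j => Gj ψ ϱ p (j + 1) K - Gj ψ ϱ p j K) (n+1),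
    Finset.sum_range_sub (fun j => Gj ψ ϱ p j K) (n+1)]
  congr 1
  · simp [Gj, sfun_last, gammaFun]
  · simp [Gj, sfun_zero, gammaFun]

lemma norm_coe_rho_le (hϱ_range : ∀ k, ϱ k ∈ Set.Icc (0:ℝ) 1) (k : KVec d) :
    ‖(ϱ k : ℂ)‖ ≤ 1 := by
  rw [Complex.norm_real, Real.norm_eq_abs, abs_of_nonneg (hϱ_range k).1]
  exact (hϱ_range k).2

lemma Gdiff_eq (ℓ : Fin (n+1)) (K : KSpace d (n+1)) :
    Gj ψ ϱ p ((ℓ : ℕ) + 1) K - Gj ψ ϱ p ℓ K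
      = (∏ i ∈ Finset.univ.erase ℓ, (ϱ (K i + sfun p ℓ i) : ℂ)) * Hf ψ ϱ p ℓ (K + sfun p ℓ) := by
  have h1 : ∀ i, i ≠ ℓ → sfun p ((ℓ:ℕ)+1) i = sfun p ℓ i := by
    intro i hi
    rw [sfun_step, Pi.add_apply, Pi.single_eq_of_ne hi, add_zero]
  unfold Gj Hf
  have e1 := (Finset.mul_prod_erase Finset.univ
      (fun i => (ϱ (K i + sfun p ((ℓ:ℕ)+1) i) : ℂ)) (Finset.mem_univ ℓ)).symm
  have e2 := (Finset.mul_prod_erase Finset.univ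
      (fun i => (ϱ (K i + sfun p ℓ i) : ℂ)) (Finset.mem_univ ℓ)).symm
  have h2 : ∏ i ∈ Finset.univ.erase ℓ, (ϱ (K i + sfun p ((ℓ:ℕ)+1) i) : ℂ)
      = ∏ i ∈ Finset.univ.erase ℓ, (ϱ (K i + sfun p ℓ i) : ℂ) := by
    apply Finset.prod_congr rfl
    intro i hi
    rw [h1 i (Finset.ne_of_mem_erase hi)]
  have h3 : K + sfun p ((ℓ:ℕ)+1) = (K + sfun p ℓ) + Pi.single ℓ (p ℓ) := by
    rw [sfun_step, add_assoc]
  have h4 : (K + sfun p ℓ) ℓ = K ℓ := by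
    rw [Pi.add_apply, sfun_self, add_zero]
  have h5 : K ℓ + sfun p ((ℓ:ℕ)+1) ℓ = K ℓ + p ℓ := by
    rw [sfun_step, Pi.add_apply, sfun_self, Pi.single_eq_same, zero_add]
  rw [e1, e2, h2, h3, h4, h5, sfun_self p ℓ, add_zero]
  ring

lemma Gdiff_norm_le (hϱ_range : ∀ k, ϱ k ∈ Set.Icc (0:ℝ) 1) (ℓ : Fin (n+1)) (K : KSpace d (n+1)) :
    ‖Gj ψ ϱ p ((ℓ : ℕ) + 1) K - Gj ψ ϱ p ℓ K‖ ≤ ‖Hf ψ ϱ p ℓ (K + sfun p ℓ)‖ := by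
  rw [Gdiff_eq, norm_mul]
  have hc : ‖∏ i ∈ Finset.univ.erase ℓ, (ϱ (K i + sfun p ℓ i) : ℂ)‖ ≤ 1 := by
    rw [norm_prod]
    apply Finset.prod_le_one
    · intro i _; exact norm_nonneg _
    · intro i _; exact norm_coe_rho_le ϱ hϱ_range _
  calc ‖_‖ * ‖_‖ ≤ 1 * ‖Hf ψ ϱ p ℓ (K + sfun p ℓ)‖ := by
        apply mul_le_mul_of_nonneg_right hc (norm_nonneg _)
  _ = _ := one_mul _
end

section
variable {d n : ℕ} (ψ : KSpace d (n + 1) → ℂ) (ϱ : KVec d → ℝ)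

/-- translated-first-coordinate difference function -/
def Hc (v : KVec d) : KSpace d (n+1) → ℂ :=
  fun X => (ϱ (X 0 + v) : ℂ) * ψ (X + Pi.single (0 : Fin (n+1)) v) - (ϱ (X 0) : ℂ) * ψ X

lemma meas_coe_rho (hϱ : Measurable ϱ) : Measurable (fun x => (ϱ x : ℂ)) :=
  Complex.measurable_ofReal.comp hϱ

lemma meas_Hf (hψ : Measurable ψ) (hϱ : Measurable ϱ) (p : KSpace d (n+1)) (ℓ : Fin (n+1)) :
    Measurable (Hf ψ ϱ p ℓ) := by
  apply Measurable.sub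
  · exact ((meas_coe_rho ϱ hϱ).comp (by fun_prop : Measurable fun X : KSpace d (n+1) => X ℓ + p ℓ)).mul
      (hψ.comp (measurable_add_const (Pi.single ℓ (p ℓ) : KSpace d (n+1))))
  · exact ((meas_coe_rho ϱ hϱ).comp (measurable_pi_apply ℓ)).mul hψ

lemma meas_Hc (hψ : Measurable ψ) (hϱ : Measurable ϱ) (v : KVec d) :
    Measurable (Hc ψ ϱ v) := by
  apply Measurable.sub
  · exact ((meas_coe_rho ϱ hϱ).comp (by fun_prop : Measurable fun X : KSpace d (n+1) => X 0 + v)).mul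
      (hψ.comp (measurable_add_const (Pi.single (0 : Fin (n+1)) v : KSpace d (n+1))))
  · exact ((meas_coe_rho ϱ hϱ).comp (measurable_pi_apply (0 : Fin (n+1)))).mul hψ

lemma meas_en2 {α : Type*} [MeasurableSpace α] {f : α → ℂ} (hf : Measurable f) :
    Measurable (fun x => en2 (f x)) := by
  unfold en2
  exact (hf.nnnorm.coe_nnreal_ennreal).pow_const 2

set_option maxHeartbeats 1000000 in
lemma Hf_to_Hc (hψ : Measurable ψ) (hϱ : Measurable ϱ)
    (hsym : IsSymFn ψ) (p : KSpace d (n+1)) (ℓ : Fin (n+1)) :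
    ∫⁻ X, en2 (Hf ψ ϱ p ℓ X) = ∫⁻ X, en2 (Hc ψ ϱ (p ℓ) X) := by
  set σ : Equiv.Perm (Fin (n+1)) := Equiv.swap 0 ℓ with hσ
  rw [← (mpPerm d (n+1) σ).lintegral_comp (meas_en2 (meas_Hf ψ ϱ hψ hϱ p ℓ))]
  have hσℓ : σ ℓ = 0 := Equiv.swap_apply_right 0 ℓ
  have hσ0 : ∀ i, σ i = 0 ↔ i = ℓ := by
    intro i
    constructor
    · intro h; have := σ.injective (h.trans hσℓ.symm); exact this
    · intro h; rw [h, hσℓ]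
  have hcomp : ∀ X : KSpace d (n+1),
      (X ∘ σ) + Pi.single ℓ (p ℓ) = (X + Pi.single (0 : Fin (n+1)) (p ℓ)) ∘ σ := by
    intro X
    funext i
    simp only [Pi.add_apply, Function.comp_apply]
    congr 1
    rw [Pi.single_apply, Pi.single_apply]
    by_cases h : i = ℓ
    · rw [if_pos h, if_pos ((hσ0 i).2 h)]
    · rw [if_neg h, if_neg (fun hc => h ((hσ0 i).1 hc))]
  have A1 : (fun X : KSpace d (n+1) => ψ (X ∘ σ)) =ᵐ[volume] ψ := hsym σ
  have A2 : (fun X : KSpace d (n+1) => ψ ((X + Pi.single (0 : Fin (n+1)) (p ℓ)) ∘ σ))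
      =ᵐ[volume] (fun X => ψ (X + Pi.single (0 : Fin (n+1)) (p ℓ))) := by
    have h := (measurePreserving_add_right volume
      (Pi.single (0 : Fin (n+1)) (p ℓ))).quasiMeasurePreserving.ae_eq_comp (hsym σ)
    simpa [Function.comp_def] using h
  apply lintegral_congr_ae
  filter_upwards [A1, A2] with X h1 h2
  have hXσℓ : (X ∘ σ) ℓ = X 0 := by simp [Function.comp_apply, hσℓ]
  unfold Hf Hc
  rw [hXσℓ, hcomp X, h1, h2]

lemma Hc_split (hψ : Measurable ψ) (hϱ : Measurable ϱ) (v : KVec d) :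
    ∫⁻ X, en2 (Hc ψ ϱ v X)
      = ∫⁻ k : KVec d, ∫⁻ K : KSpace d n,
          en2 ((ϱ (k + v) : ℂ) * ψ (Fin.cons (k + v) K) - (ϱ k : ℂ) * ψ (Fin.cons k K)) := by
  rw [lintegral_cons d n _ (meas_en2 (meas_Hc ψ ϱ hψ hϱ v))]
  congr 1
  funext k
  congr 1
  funext K
  have h1 : (Fin.cons k K : KSpace d (n+1)) 0 = k := rfl
  have h2 : (Fin.cons k K : KSpace d (n+1)) + Pi.single (0 : Fin (n+1)) v = Fin.cons (k + v) K := by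
    funext i
    refine Fin.cases ?_ ?_ i
    · simp
    · intro j
      simp [Pi.single_eq_of_ne (Fin.succ_ne_zero j)]
  unfold Hc
  rw [h1, h2]
end

lemma en2_neg (z : ℂ) : en2 (-z) = en2 z := by unfold en2; rw [nnnorm_neg]

lemma en2_mul_le {a z : ℂ} (ha : ‖a‖ ≤ 1) : en2 (a * z) ≤ en2 z := by
  apply en2_mono
  rw [norm_mul]
  calc ‖a‖ * ‖z‖ ≤ 1 * ‖z‖ := mul_le_mul_of_nonneg_right ha (norm_nonneg _)
  _ = ‖z‖ := one_mul _

lemma en2_sub_le {a b u w : ℂ} (ha : ‖a‖ ≤ 1) (hb : ‖b‖ ≤ 1) :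
    en2 (a * u - b * w) ≤ 2 * en2 u + 2 * en2 w := by
  have h := en2_sum_le 2 ![a * u, -(b * w)]
  have h2 : (∑ i : Fin 2, ![a * u, -(b * w)] i) = a * u - b * w := by
    simp [Fin.sum_univ_two, sub_eq_add_neg]
  rw [h2] at h
  have h3 : (∑ i : Fin 2, en2 (![a * u, -(b * w)] i)) = en2 (a * u) + en2 (b * w) := by
    simp [Fin.sum_univ_two, en2_neg]
  rw [h3] at h
  calc en2 (a * u - b * w) ≤ (2 : ℕ) * (en2 (a * u) + en2 (b * w)) := h
  _ ≤ (2 : ℕ) * (en2 u + en2 w) := by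
      gcongr
      · exact en2_mul_le ha
      · exact en2_mul_le hb
  _ = 2 * en2 u + 2 * en2 w := by push_cast; ring

section
variable {d n : ℕ} (ψ : KSpace d (n + 1) → ℂ) (ϱ : KVec d → ℝ)

lemma lint_en2_psi_fin (hψ_mem : MemLp ψ 2 (volume : Measure (KSpace d (n+1)))) :
    ∫⁻ X, en2 (ψ X) < ⊤ := by
  have h := (eLpNorm_lt_top_iff_lintegral_rpow_enorm_lt_top (f := ψ)
      (μ := (volume : Measure (KSpace d (n+1)))) (by norm_num) (by norm_num)).mp hψ_mem.2
  have h2 : ∀ x : ENNReal, x ^ ((2 : ENNReal).toReal) = x ^ (2 : ℕ) := by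
    intro x
    rw [show ((2 : ENNReal).toReal) = ((2 : ℕ) : ℝ) by norm_num, ENNReal.rpow_natCast]
  simp_rw [h2] at h
  exact h

lemma Hc_fin (hψ : Measurable ψ) (hϱ : Measurable ϱ)
    (hϱ_range : ∀ k, ϱ k ∈ Set.Icc (0:ℝ) 1)
    (hψ_mem : MemLp ψ 2 (volume : Measure (KSpace d (n+1)))) (v : KVec d) :
    ∫⁻ X, en2 (Hc ψ ϱ v X) < ⊤ := by
  have step1 : ∫⁻ X, en2 (Hc ψ ϱ v X)
      ≤ ∫⁻ X, (2 * en2 (ψ (X + Pi.single (0 : Fin (n+1)) v)) + 2 * en2 (ψ X)) := by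
    apply lintegral_mono
    intro X
    exact en2_sub_le (norm_coe_rho_le ϱ hϱ_range _) (norm_coe_rho_le ϱ hϱ_range _)
  have step2 : ∫⁻ X, (2 * en2 (ψ (X + Pi.single (0 : Fin (n+1)) v)) + 2 * en2 (ψ X))
      = 2 * (∫⁻ X : KSpace d (n+1), en2 (ψ (X + Pi.single (0 : Fin (n+1)) v))) + 2 * ∫⁻ X, en2 (ψ X) := by
    have hm1 : Measurable fun X : KSpace d (n+1) => en2 (ψ (X + Pi.single (0 : Fin (n+1)) v)) :=
      meas_en2 (hψ.comp (measurable_add_const _))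
    rw [lintegral_add_left (hm1.const_mul 2),
      lintegral_const_mul' 2 _ ENNReal.ofNat_ne_top, lintegral_const_mul' 2 _ ENNReal.ofNat_ne_top]
  have step3 : ∫⁻ X : KSpace d (n+1), en2 (ψ (X + Pi.single (0 : Fin (n+1)) v)) = ∫⁻ X, en2 (ψ X) :=
    lintegral_add_right_eq_self (fun X => en2 (ψ X)) (Pi.single (0 : Fin (n+1)) v)
  have hfin := lint_en2_psi_fin ψ hψ_mem
  calc ∫⁻ X, en2 (Hc ψ ϱ v X) ≤ _ := step1
  _ = 2 * (∫⁻ X, en2 (ψ X)) + 2 * ∫⁻ X, en2 (ψ X) := by rw [step2, step3]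
  _ < ⊤ := by
      apply ENNReal.add_lt_top.2
      constructor <;> exact ENNReal.mul_lt_top ENNReal.ofNat_lt_top hfin

lemma en2_sqrt_mul (z : ℂ) :
    en2 ((Real.sqrt (n + 1) : ℂ) * z) = ((n + 1 : ℕ) : ENNReal) * en2 z := by
  unfold en2
  rw [nnnorm_mul, ENNReal.coe_mul, mul_pow]
  congr 1
  rw [← ENNReal.coe_pow]
  have : (‖((Real.sqrt (n + 1) : ℝ) : ℂ)‖₊ : NNReal) ^ 2 = ((n + 1 : ℕ) : NNReal) := by
    apply NNReal.coe_injective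
    push_cast
    rw [Complex.norm_real, Real.norm_eq_abs, abs_of_nonneg (Real.sqrt_nonneg _),
      Real.sq_sqrt (by positivity)]
  rw [this]
  simp
end

section
variable {d n : ℕ}

lemma meas_gamma (ψ : KSpace d (n+1) → ℂ) (ϱ : KVec d → ℝ)
    (hψ : Measurable ψ) (hϱ : Measurable ϱ) : Measurable (gammaFun ϱ ψ) := by
  apply Measurable.mul _ hψ
  apply Finset.measurable_prod
  intro i _
  exact (meas_coe_rho ϱ hϱ).comp (measurable_pi_apply i)

lemma key (ψ : KSpace d (n + 1) → ℂ) (hψ : Measurable ψ)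
    (hψ_mem : MemLp ψ 2 (volume : Measure (KSpace d (n + 1))))
    (hψ_sym : IsSymFn ψ)
    (ϱ : KVec d → ℝ) (hϱ_meas : Measurable ϱ) (hϱ_range : ∀ k, ϱ k ∈ Set.Icc (0 : ℝ) 1)
    (p : KSpace d (n + 1)) :
    (∫ K : KSpace d (n + 1), ‖gammaFun ϱ ψ (K + p) - gammaFun ϱ ψ K‖ ^ 2) ≤
      ∑ ℓ : Fin (n + 1), ∫ k : KVec d, ∫ K : KSpace d n,
        ‖(ϱ (k + p ℓ) : ℂ) * aFun1 ψ (k + p ℓ) K - (ϱ k : ℂ) * aFun1 ψ k K‖ ^ 2 := by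
  -- the product-space integrand for the RHS
  set g : Fin (n+1) → KVec d × KSpace d n → ℂ := fun ℓ q =>
    (ϱ (q.1 + p ℓ) : ℂ) * aFun1 ψ (q.1 + p ℓ) q.2 - (ϱ q.1 : ℂ) * aFun1 ψ q.1 q.2 with hg_def
  have hg : ∀ ℓ, Measurable (g ℓ) := by
    intro ℓ
    have hc1 : Measurable fun q : KVec d × KSpace d n => ψ (Fin.cons (q.1 + p ℓ) q.2) := by
      apply hψ.comp
      exact (mpCons d n).measurable.comp ((measurable_fst.add_const (p ℓ)).prodMk measurable_snd)
    have hc2 : Measurable fun q : KVec d × KSpace d n => ψ (Fin.cons q.1 q.2) :=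
      hψ.comp (mpCons d n).measurable
    apply Measurable.sub
    · exact ((meas_coe_rho ϱ hϱ_meas).comp (measurable_fst.add_const (p ℓ))).mul
        (measurable_const.mul hc1)
    · exact ((meas_coe_rho ϱ hϱ_meas).comp measurable_fst).mul (measurable_const.mul hc2)
  set B : Fin (n+1) → ENNReal := fun ℓ => ∫⁻ k : KVec d, ∫⁻ K : KSpace d n, en2 (g ℓ (k, K))
    with hB_def
  -- B ℓ in terms of Hc
  have hBeq : ∀ ℓ, B ℓ = ((n + 1 : ℕ) : ENNReal) * ∫⁻ X, en2 (Hc ψ ϱ (p ℓ) X) := by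
    intro ℓ
    rw [Hc_split ψ ϱ hψ hϱ_meas (p ℓ), hB_def]
    simp only
    rw [← lintegral_const_mul' _ _ (by simp : ((n + 1 : ℕ) : ENNReal) ≠ ⊤)]
    congr 1
    funext k
    rw [← lintegral_const_mul' _ _ (by simp : ((n + 1 : ℕ) : ENNReal) ≠ ⊤)]
    congr 1
    funext K
    rw [← en2_sqrt_mul]
    congr 1
    simp only [hg_def, aFun1]
    ring
  have hBfin : ∀ ℓ, B ℓ ≠ ⊤ := by
    intro ℓ
    rw [hBeq ℓ]
    exact (ENNReal.mul_lt_top (by simp) (Hc_fin ψ ϱ hψ hϱ_meas hϱ_range hψ_mem (p ℓ))).ne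
  -- main ENNReal inequality
  have hmain : (∫⁻ K : KSpace d (n+1), en2 (gammaFun ϱ ψ (K + p) - gammaFun ϱ ψ K))
      ≤ ∑ ℓ : Fin (n+1), B ℓ := by
    have hpt : ∀ K : KSpace d (n+1), en2 (gammaFun ϱ ψ (K + p) - gammaFun ϱ ψ K)
        ≤ ((n + 1 : ℕ) : ENNReal) * ∑ ℓ : Fin (n+1), en2 (Hf ψ ϱ p ℓ (K + sfun p ℓ)) := by
      intro K
      rw [telescope ψ ϱ p K]
      calc en2 (∑ ℓ : Fin (n+1), (Gj ψ ϱ p ((ℓ : ℕ) + 1) K - Gj ψ ϱ p ℓ K))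
          ≤ ((n + 1 : ℕ) : ENNReal) *
            ∑ ℓ : Fin (n+1), en2 (Gj ψ ϱ p ((ℓ : ℕ) + 1) K - Gj ψ ϱ p ℓ K) :=
            en2_sum_le (n+1) _
      _ ≤ ((n + 1 : ℕ) : ENNReal) * ∑ ℓ : Fin (n+1), en2 (Hf ψ ϱ p ℓ (K + sfun p ℓ)) := by
            gcongr with ℓ _
            exact en2_mono (Gdiff_norm_le ψ ϱ p hϱ_range ℓ K)
    calc (∫⁻ K : KSpace d (n+1), en2 (gammaFun ϱ ψ (K + p) - gammaFun ϱ ψ K))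
        ≤ ∫⁻ K : KSpace d (n+1), ((n + 1 : ℕ) : ENNReal) *
            ∑ ℓ : Fin (n+1), en2 (Hf ψ ϱ p ℓ (K + sfun p ℓ)) := lintegral_mono hpt
    _ = ((n + 1 : ℕ) : ENNReal) * ∑ ℓ : Fin (n+1),
          ∫⁻ K : KSpace d (n+1), en2 (Hf ψ ϱ p ℓ (K + sfun p ℓ)) := by
        rw [lintegral_const_mul' _ _ (by simp : ((n + 1 : ℕ) : ENNReal) ≠ ⊤)]
        congr 1
        apply lintegral_finset_sum
        intro ℓ _
        exact meas_en2 ((meas_Hf ψ ϱ hψ hϱ_meas p ℓ).comp (measurable_add_const (sfun p ℓ)))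
    _ = ∑ ℓ : Fin (n+1), B ℓ := by
        rw [Finset.mul_sum]
        apply Finset.sum_congr rfl
        intro ℓ _
        rw [hBeq ℓ]
        congr 1
        rw [lintegral_add_right_eq_self (fun X => en2 (Hf ψ ϱ p ℓ X)) (sfun p ℓ)]
        exact Hf_to_Hc ψ ϱ hψ hϱ_meas hψ_sym p ℓ
  -- convert LHS
  have hG : Measurable (gammaFun ϱ ψ) := meas_gamma ψ ϱ hψ hϱ_meas
  have hLHS : (∫ K : KSpace d (n + 1), ‖gammaFun ϱ ψ (K + p) - gammaFun ϱ ψ K‖ ^ 2)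
      = (∫⁻ K : KSpace d (n+1), en2 (gammaFun ϱ ψ (K + p) - gammaFun ϱ ψ K)).toReal := by
    have hme : Measurable fun K : KSpace d (n+1) =>
        ‖gammaFun ϱ ψ (K + p) - gammaFun ϱ ψ K‖ ^ 2 :=
      ((hG.comp (measurable_add_const p)).sub hG).norm.pow_const 2
    rw [integral_eq_lintegral_of_nonneg_ae (ae_of_all _ fun K => sq_nonneg _)
      hme.aestronglyMeasurable]
    congr 1
    apply lintegral_congr
    intro K
    exact ofReal_normsq _
  -- convert RHS
  have hRHS : ∀ ℓ, (∫ k : KVec d, ∫ K : KSpace d n, ‖g ℓ (k, K)‖ ^ 2) = (B ℓ).toReal := by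
    intro ℓ
    set J : KVec d → ENNReal := fun k => ∫⁻ K : KSpace d n, en2 (g ℓ (k, K)) with hJ_def
    have hJmeas : Measurable J := Measurable.lintegral_prod_right' (meas_en2 (hg ℓ))
    have hinner : ∀ k, (∫ K : KSpace d n, ‖g ℓ (k, K)‖ ^ 2) = (J k).toReal := by
      intro k
      have hme2 : Measurable fun K : KSpace d n => ‖g ℓ (k, K)‖ ^ 2 :=
        ((hg ℓ).comp measurable_prodMk_left).norm.pow_const 2
      rw [integral_eq_lintegral_of_nonneg_ae (ae_of_all _ fun K => sq_nonneg _)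
        hme2.aestronglyMeasurable]
      congr 1
      apply lintegral_congr
      intro K
      exact ofReal_normsq _
    simp_rw [hinner]
    rw [integral_eq_lintegral_of_nonneg_ae (ae_of_all _ fun k => ENNReal.toReal_nonneg)
      hJmeas.ennreal_toReal.aestronglyMeasurable]
    have hae : ∀ᵐ k : KVec d, J k < ⊤ := ae_lt_top hJmeas (hBfin ℓ)
    have : (∫⁻ k : KVec d, ENNReal.ofReal ((J k).toReal)) = ∫⁻ k : KVec d, J k := by
      apply lintegral_congr_ae
      filter_upwards [hae] with k hk
      rw [ENNReal.ofReal_toReal hk.ne]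
    rw [this]
  calc (∫ K : KSpace d (n + 1), ‖gammaFun ϱ ψ (K + p) - gammaFun ϱ ψ K‖ ^ 2)
      = (∫⁻ K : KSpace d (n+1), en2 (gammaFun ϱ ψ (K + p) - gammaFun ϱ ψ K)).toReal := hLHS
  _ ≤ (∑ ℓ : Fin (n+1), B ℓ).toReal := by
      apply ENNReal.toReal_mono _ hmain
      exact (ENNReal.sum_lt_top.mpr (fun ℓ _ => (hBfin ℓ).lt_top)).ne
  _ = ∑ ℓ : Fin (n+1), (B ℓ).toReal := ENNReal.toReal_sum (fun ℓ _ => hBfin ℓ)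
  _ = ∑ ℓ : Fin (n + 1), ∫ k : KVec d, ∫ K : KSpace d n,
        ‖(ϱ (k + p ℓ) : ℂ) * aFun1 ψ (k + p ℓ) K - (ϱ k : ℂ) * aFun1 ψ k K‖ ^ 2 := by
      apply Finset.sum_congr rfl
      intro ℓ _
      rw [← hRHS ℓ]
end

/-- For a permutation-symmetric `ψ ∈ L²(ℝ^{d·(n+1)})`, measurable `ϱ : ℝ^d → [0,1]`,
`G = Γ(ϱ)ψ` and any `p = (p₁,…,p_{n+1}) ∈ ℝ^{d·(n+1)}`,
`‖τ_p G − G‖² ≤ ∑_ℓ ∫ ‖ϱ(k+p_ℓ) a_{k+p_ℓ}ψ − ϱ(k) a_k ψ‖² dk`,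
where `τ_p G (x) = G (x + p)`. -/
theorem translation_difference_bound (d n : ℕ) (ψ : KSpace d (n + 1) → ℂ)
    (hψ_mem : MemLp ψ 2 (volume : Measure (KSpace d (n + 1))))
    (hψ_sym : IsSymFn ψ)
    (ϱ : KVec d → ℝ) (hϱ_meas : Measurable ϱ) (hϱ_range : ∀ k, ϱ k ∈ Set.Icc (0 : ℝ) 1)
    (p : KSpace d (n + 1)) :
    (∫ K : KSpace d (n + 1), ‖gammaFun ϱ ψ (K + p) - gammaFun ϱ ψ K‖ ^ 2) ≤
      ∑ ℓ : Fin (n + 1), ∫ k : KVec d, ∫ K : KSpace d n,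
        ‖(ϱ (k + p ℓ) : ℂ) * aFun1 ψ (k + p ℓ) K - (ϱ k : ℂ) * aFun1 ψ k K‖ ^ 2 := by
  have hsm := hψ_mem.1
  set ψ' := hsm.mk ψ with hψ'def
  have hae : ψ =ᵐ[(volume : Measure (KSpace d (n+1)))] ψ' := hsm.ae_eq_mk
  have hψ'meas : Measurable ψ' := hsm.stronglyMeasurable_mk.measurable
  have hψ'mem : MemLp ψ' 2 (volume : Measure (KSpace d (n+1))) := hψ_mem.ae_eq hae
  have hψ'sym : IsSymFn ψ' := by
    intro σ
    have h1 : (fun K : KSpace d (n+1) => ψ' (K ∘ σ)) =ᵐ[volume]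
        (fun K : KSpace d (n+1) => ψ (K ∘ σ)) := by
      have := (mpPerm d (n+1) σ).quasiMeasurePreserving.ae_eq_comp hae.symm
      simpa [Function.comp_def] using this
    exact h1.trans ((hψ_sym σ).trans hae)
  have hLHSeq : (∫ K : KSpace d (n + 1), ‖gammaFun ϱ ψ (K + p) - gammaFun ϱ ψ K‖ ^ 2)
      = (∫ K : KSpace d (n + 1), ‖gammaFun ϱ ψ' (K + p) - gammaFun ϱ ψ' K‖ ^ 2) := by
    apply integral_congr_ae
    have h1 : gammaFun ϱ ψ =ᵐ[(volume : Measure (KSpace d (n+1)))] gammaFun ϱ ψ' := by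
      filter_upwards [hae] with K hK
      simp only [gammaFun, hK]
    have h2 : (fun K : KSpace d (n+1) => gammaFun ϱ ψ (K + p)) =ᵐ[volume]
        (fun K => gammaFun ϱ ψ' (K + p)) := by
      have := (measurePreserving_add_right volume p).quasiMeasurePreserving.ae_eq_comp h1
      simpa [Function.comp_def] using this
    filter_upwards [h1, h2] with K hK1 hK2
    rw [hK2, hK1]
  have hRHSeq : ∀ ℓ : Fin (n+1),
      (∫ k : KVec d, ∫ K : KSpace d n,
        ‖(ϱ (k + p ℓ) : ℂ) * aFun1 ψ (k + p ℓ) K - (ϱ k : ℂ) * aFun1 ψ k K‖ ^ 2)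
      = (∫ k : KVec d, ∫ K : KSpace d n,
        ‖(ϱ (k + p ℓ) : ℂ) * aFun1 ψ' (k + p ℓ) K - (ϱ k : ℂ) * aFun1 ψ' k K‖ ^ 2) := by
    intro ℓ
    apply integral_congr_ae
    have h2 : (fun q : KVec d × KSpace d n => ψ (Fin.cons q.1 q.2)) =ᵐ[volume]
        (fun q => ψ' (Fin.cons q.1 q.2)) := by
      have := (mpCons d n).quasiMeasurePreserving.ae_eq_comp hae
      simpa [Function.comp_def] using this
    have hmp : MeasurePreserving (fun q : KVec d × KSpace d n => (q.1 + p ℓ, q.2))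
        (volume : Measure (KVec d × KSpace d n)) volume := by
      rw [Measure.volume_eq_prod]
      exact (measurePreserving_add_right volume (p ℓ)).prod (MeasurePreserving.id volume)
    have h3 : (fun q : KVec d × KSpace d n => ψ (Fin.cons (q.1 + p ℓ) q.2)) =ᵐ[volume]
        (fun q => ψ' (Fin.cons (q.1 + p ℓ) q.2)) := by
      have := hmp.quasiMeasurePreserving.ae_eq_comp h2
      simpa [Function.comp_def] using this
    have h4 := h2.and h3
    rw [Measure.volume_eq_prod] at h4
    have h5 := Measure.ae_ae_of_ae_prod h4
    filter_upwards [h5] with k hk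
    apply integral_congr_ae
    filter_upwards [hk] with K hK
    obtain ⟨e1, e2⟩ := hK
    simp only [aFun1]
    rw [e1, e2]
  rw [hLHSeq]
  calc (∫ K : KSpace d (n + 1), ‖gammaFun ϱ ψ' (K + p) - gammaFun ϱ ψ' K‖ ^ 2)
      ≤ ∑ ℓ : Fin (n + 1), ∫ k : KVec d, ∫ K : KSpace d n,
        ‖(ϱ (k + p ℓ) : ℂ) * aFun1 ψ' (k + p ℓ) K - (ϱ k : ℂ) * aFun1 ψ' k K‖ ^ 2 :=
      key ψ' hψ'meas hψ'mem hψ'sym ϱ hϱ_meas hϱ_range p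
  _ = ∑ ℓ : Fin (n + 1), ∫ k : KVec d, ∫ K : KSpace d n,
        ‖(ϱ (k + p ℓ) : ℂ) * aFun1 ψ (k + p ℓ) K - (ϱ k : ℂ) * aFun1 ψ k K‖ ^ 2 := by
      apply Finset.sum_congr rfl
      intro ℓ _
      rw [← hRHSeq ℓ]
end
end
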